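/- Fix a permutation σ. Then the proportion of permutations τ of length n such that the interval [σ,τ] in the consecutive pattern poset contains a non-trivial disconnected subinterval tends to 1 as n → ∞; that is, lim_{n→∞} #{τ ∈ S_n : [σ,τ] contains a non-trivial disconnected subinterval} / n! = 1. -/

import Mathlib

open scoped Classical

noncomputable section

/-- A permutation of length `n`, written in one-line notation as `τ 0, τ 1, …, τ (n-1)`. -/
abbrev Perm' (n : ℕ) := Equiv.Perm (Fin n)

/-- `σ` occurs in `τ` as a consecutive pattern at (0-indexed) starting position `i`:
the window `τ i, …, τ (i+m-1)` of adjacent entries is in the same relative order as `σ`. -/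
def OccursAt {m n : ℕ} (σ : Perm' m) (τ : Perm' n) (i : ℕ) : Prop :=
  ∃ h : i + m ≤ n, ∀ a b : Fin m,
    σ a < σ b ↔
      τ ⟨i + a, by have := a.isLt; omega⟩ < τ ⟨i + b, by have := b.isLt; omega⟩

/-- Consecutive pattern containment `σ ≤ τ`. -/
def PattLE {m n : ℕ} (σ : Perm' m) (τ : Perm' n) : Prop :=
  ∃ i, OccursAt σ τ i

/-- Permutations of arbitrary length: the carrier of the consecutive pattern poset. -/
abbrev PermS : Type := Σ n : ℕ, Perm' n

/-- The order of the consecutive pattern poset. -/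
def pLE (p q : PermS) : Prop := PattLE p.2 q.2

/-- The strict order of the consecutive pattern poset. -/
def pLT (p q : PermS) : Prop := pLE p q ∧ p ≠ q

/-- The covering relation of the consecutive pattern poset. -/
def pCovBy (p q : PermS) : Prop :=
  pLT p q ∧ ∀ r : PermS, pLT p r → pLT r q → False

/-- The open interval `(p,q)` in the consecutive pattern poset. -/
def openInterval (p q : PermS) : Set PermS := {r | pLT p r ∧ pLT r q}

/-- The Hasse diagram of the open interval `(p,q)`: vertices are the permutations strictly
between `p` and `q`, edges are the covering relations of the consecutive pattern poset. -/
def hasse (p q : PermS) : SimpleGraph (openInterval p q) :=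
  SimpleGraph.fromRel fun a b => pCovBy a.1 b.1

/-- The interval `[p,q]` is disconnected if the Hasse diagram of `(p,q)` is not connected. -/
def IntervalDisconnected (p q : PermS) : Prop := ¬ (hasse p q).Connected

/-- `window τ i m` is the reduction of the window of `τ` of length `m` starting at
(0-indexed) position `i`, i.e. the pattern `τ[i+1, i+m]` in 1-indexed notation. -/
def window {n : ℕ} (τ : Perm' n) (i m : ℕ) : Perm' m :=
  if h : i + m ≤ n then
    (Tuple.sort fun a : Fin m => τ ⟨i + a, by have := a.isLt; omega⟩)⁻¹
  else 1

/-- `τ` is monotone, i.e. equal to `12…n` or `n…21`. -/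
def IsMonotone {n : ℕ} (τ : Perm' n) : Prop :=
  (∀ a b : Fin n, a ≤ b → τ a ≤ τ b) ∨ (∀ a b : Fin n, a ≤ b → τ b ≤ τ a)

/-- `τ` has a bifix (a common proper prefix and proper suffix) of length `k`. -/
def HasBifixLen {n : ℕ} (τ : Perm' n) (k : ℕ) : Prop :=
  0 < k ∧ k < n ∧ window τ 0 k = window τ (n - k) k

/-- The length `|x(τ)|` of the exterior of `τ`, the longest bifix of `τ`. -/
def extLen {n : ℕ} (τ : Perm' n) : ℕ := Nat.findGreatest (HasBifixLen τ) n

/-- The exterior `x(τ)` of `τ`: its longest bifix. -/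
def extPerm {n : ℕ} (τ : Perm' n) : Perm' (extLen τ) := window τ 0 (extLen τ)

/-- The interior `i(τ) = τ[2,n-1]` of `τ`. -/
def intPerm {n : ℕ} (τ : Perm' n) : Perm' (n - 2) := window τ 1 (n - 2)

/-- `p` straddles `q`: `p < q`, `p` is both a prefix and a suffix of `q`,
and `p` has no other occurrence in `q`. -/
def Straddles (p q : PermS) : Prop :=
  pLT p q ∧ OccursAt p.2 q.2 0 ∧ OccursAt p.2 q.2 (q.1 - p.1) ∧
    ∀ i, OccursAt p.2 q.2 i → i = 0 ∨ i = q.1 - p.1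

/-- The interval `[p,q]` contains a non-trivial disconnected subinterval, i.e. a
subinterval `[a,b]` of rank at least 3 which is disconnected. -/
def HasNontrivDisconSub (p q : PermS) : Prop :=
  ∃ a b : PermS, pLE p a ∧ pLE a b ∧ pLE b q ∧ a.1 + 3 ≤ b.1 ∧ IntervalDisconnected a b

/-- The finite set of all permutations of length at most `N`. -/
def permsUpTo (N : ℕ) : Finset PermS :=
  (Finset.range (N + 1)).sigma fun n => (Finset.univ : Finset (Perm' n))

/-- The closed interval `[p,q]` of the consecutive pattern poset, as a finite set. -/
def intervalF (p q : PermS) : Finset PermS :=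
  (permsUpTo q.1).filter fun r => pLE p r ∧ pLE r q

/-- The number of elements of the interval `[σ,τ]` of rank `r`, i.e. of length `|σ| + r`. -/
def rankCard {m n : ℕ} (σ : Perm' m) (τ : Perm' n) (r : ℕ) : ℕ :=
  ((permsUpTo n).filter fun p => pLE ⟨m, σ⟩ p ∧ pLE p ⟨n, τ⟩ ∧ p.1 = m + r).card

/-- The direct sum `σ ⊕ π` of two permutations. -/
def dsum {m k : ℕ} (σ : Perm' m) (π : Perm' k) : Perm' (m + k) :=
  finSumFinEquiv.permCongr (σ.sumCongr π)


lemma perm_eq_of_iff {n : ℕ} {p q : Perm' n} (h : ∀ a b : Fin n, p a < p b ↔ q a < q b) :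
    p = q := by
  have hsm : StrictMono (fun x => q (p.symm x)) := by
    intro x y hxy
    have := (h (p.symm x) (p.symm y)).mp (by simpa using hxy)
    simpa using this
  have hid : StrictMono (id : Fin n → Fin n) := strictMono_id
  have hr : Set.range (fun x => q (p.symm x)) = Set.range (id : Fin n → Fin n) := by
    rw [Set.range_id]
    exact Set.eq_univ_of_forall (fun x => ⟨p (q.symm x), by simp⟩)
  haveI : WellFoundedLT (Fin n) := inferInstance
  have := (hsm.range_inj hid).mp hr
  ext a
  have h2 := congrFun this (p a)
  simp only [Equiv.symm_apply_apply, id_eq] at h2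
  exact congrArg Fin.val h2.symm

lemma occursAt_trans {k m n : ℕ} {p : Perm' k} {q : Perm' m} {r : Perm' n} {i j : ℕ}
    (h1 : OccursAt p q i) (h2 : OccursAt q r j) : OccursAt p r (j + i) := by
  obtain ⟨hb1, h1⟩ := h1
  obtain ⟨hb2, h2⟩ := h2
  refine ⟨by omega, fun a b => ?_⟩
  rw [h1 a b]
  have h3 := h2 ⟨i + a, by have := a.isLt; omega⟩ ⟨i + b, by have := b.isLt; omega⟩
  have e1 : (⟨j + i + ↑a, by have := a.isLt; omega⟩ : Fin n)
      = ⟨j + ↑(⟨i + ↑a, by have := a.isLt; omega⟩ : Fin m), by have := a.isLt; omega⟩ :=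
    Fin.ext (by simp [Nat.add_assoc])
  have e2 : (⟨j + i + ↑b, by have := b.isLt; omega⟩ : Fin n)
      = ⟨j + ↑(⟨i + ↑b, by have := b.isLt; omega⟩ : Fin m), by have := b.isLt; omega⟩ :=
    Fin.ext (by simp [Nat.add_assoc])
  rw [e1, e2]
  exact h3

lemma occursAt_le {m n : ℕ} {p : Perm' m} {q : Perm' n} {i : ℕ} (h : OccursAt p q i) :
    i + m ≤ n := h.1

lemma occursAt_same_len {n : ℕ} {p q : Perm' n} {i : ℕ} (h : OccursAt p q i) :
    p = q ∧ i = 0 := by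
  obtain ⟨hb, h⟩ := h
  have hi : i = 0 := by omega
  subst hi
  refine ⟨perm_eq_of_iff (fun a b => ?_), rfl⟩
  rw [h a b]
  constructor <;> intro hl <;> [skip; skip] <;>
    · convert hl using 2 <;> exact Fin.ext (by simp)

lemma window_lt_iff {n : ℕ} (τ : Perm' n) (i m : ℕ) (h : i + m ≤ n) (a b : Fin m) :
    window τ i m a < window τ i m b ↔
      τ ⟨i + a, by have := a.isLt; omega⟩ < τ ⟨i + b, by have := b.isLt; omega⟩ := by
  rw [window, dif_pos h]
  set f : Fin m → Fin n := fun a : Fin m => τ ⟨i + a, by have := a.isLt; omega⟩ with hf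
  have hinj : Function.Injective f := by
    intro a b hab
    have := τ.injective hab
    exact Fin.ext (by have := congrArg Fin.val this; simpa using this)
  have hsm : StrictMono (f ∘ Tuple.sort f) :=
    (Tuple.monotone_sort f).strictMono_of_injective (hinj.comp (Equiv.injective _))
  have key : ∀ a b : Fin m, f a < f b ↔ (Tuple.sort f)⁻¹ a < (Tuple.sort f)⁻¹ b := by
    intro a b
    have h1 : f a = (f ∘ Tuple.sort f) ((Tuple.sort f)⁻¹ a) := by
      simp [Function.comp, Equiv.Perm.inv_def]
    have h2 : f b = (f ∘ Tuple.sort f) ((Tuple.sort f)⁻¹ b) := by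
      simp [Function.comp, Equiv.Perm.inv_def]
    rw [h1, h2, hsm.lt_iff_lt]
  exact (key a b).symm

lemma window_occursAt {n : ℕ} (τ : Perm' n) (i m : ℕ) (h : i + m ≤ n) :
    OccursAt (window τ i m) τ i :=
  ⟨h, fun a b => window_lt_iff τ i m h a b⟩

lemma occursAt_window_eq {m n : ℕ} {p : Perm' m} {τ : Perm' n} {i : ℕ}
    (h : OccursAt p τ i) : window τ i m = p := by
  obtain ⟨hb, ho⟩ := h
  exact perm_eq_of_iff (fun a b => by rw [window_lt_iff τ i m hb a b, ← ho a b])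

lemma occursAt_sub {k m n : ℕ} {x : Perm' k} {y : Perm' m} {q : Perm' n} {i j : ℕ}
    (hx : OccursAt x q (i + j)) (hy : OccursAt y q i) (hk : j + k ≤ m) :
    OccursAt x y j := by
  obtain ⟨hbx, hx⟩ := hx
  obtain ⟨hby, hy⟩ := hy
  refine ⟨hk, fun a b => ?_⟩
  rw [hx a b]
  have h2 := hy ⟨j + a, by have := a.isLt; omega⟩ ⟨j + b, by have := b.isLt; omega⟩
  have e1 : (⟨i + j + ↑a, by have := a.isLt; omega⟩ : Fin n)
      = ⟨i + ↑(⟨j + ↑a, by have := a.isLt; omega⟩ : Fin m), by have := a.isLt; omega⟩ :=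
    Fin.ext (by simp [Nat.add_assoc])
  have e2 : (⟨i + j + ↑b, by have := b.isLt; omega⟩ : Fin n)
      = ⟨i + ↑(⟨j + ↑b, by have := b.isLt; omega⟩ : Fin m), by have := b.isLt; omega⟩ :=
    Fin.ext (by simp [Nat.add_assoc])
  rw [e1, e2]
  exact h2.symm

lemma pLE_trans {x y z : PermS} (h1 : pLE x y) (h2 : pLE y z) : pLE x z := by
  obtain ⟨i, h1⟩ := h1
  obtain ⟨j, h2⟩ := h2
  exact ⟨j + i, occursAt_trans h1 h2⟩

lemma pLE_len {x y : PermS} (h : pLE x y) : x.1 ≤ y.1 := by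
  obtain ⟨i, h⟩ := h
  have := h.1
  omega

lemma ne_of_fst_ne {x y : PermS} (h : x.1 ≠ y.1) : x ≠ y :=
  fun he => h (congrArg Sigma.fst he)

lemma pLT_len {x y : PermS} (h : pLT x y) : x.1 < y.1 := by
  rcases Nat.lt_or_ge x.1 y.1 with hl | hg
  · exact hl
  · exfalso
    have hle := pLE_len h.1
    have heq : x.1 = y.1 := by omega
    obtain ⟨n1, x2⟩ := x
    obtain ⟨n2, y2⟩ := y
    simp only at heq
    subst heq
    obtain ⟨i, hocc⟩ := h.1
    obtain ⟨he, _⟩ := occursAt_same_len hocc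
    exact h.2 (by simpa using he)

section Straddle
variable {p q : PermS}

/-- Transfer: an occurrence of `p` at `j` in a vertex `π` occurring at `i` in `q`
forces `i + j ∈ {0, q.1 - p.1}`. -/
lemma straddle_transfer (hs : Straddles p q) {π : PermS} {i j : ℕ}
    (hj : OccursAt p.2 π.2 j) (hi : OccursAt π.2 q.2 i) :
    i + j = 0 ∨ i + j = q.1 - p.1 :=
  hs.2.2.2 (i + j) (occursAt_trans hj hi)

/-- In a vertex of the open interval, `p` occurs exactly once, at `0` or at the end. -/
lemma straddle_vertex (hs : Straddles p q) (hr : p.1 + 3 ≤ q.1) {π : PermS}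
    (h1 : pLT p π) (h2 : pLT π q) :
    ∃ j, OccursAt p.2 π.2 j ∧ (j = 0 ∨ j = π.1 - p.1) ∧
      ∀ j', OccursAt p.2 π.2 j' → j' = j := by
  have hlen1 : p.1 < π.1 := pLT_len h1
  have hlen2 : π.1 < q.1 := pLT_len h2
  obtain ⟨i, hi⟩ := h2.1
  have hib : i + π.1 ≤ q.1 := hi.1
  obtain ⟨j, hj⟩ := h1.1
  have hjb : j + p.1 ≤ π.1 := hj.1
  have huniq : ∀ j', OccursAt p.2 π.2 j' → j' = j := by
    intro j' hj'
    have t1 := straddle_transfer hs hj hi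
    have t2 := straddle_transfer hs hj' hi
    have hj'b : j' + p.1 ≤ π.1 := hj'.1
    omega
  refine ⟨j, hj, ?_, huniq⟩
  have t1 := straddle_transfer hs hj hi
  omega

def Lcl (p : PermS) (π : PermS) : Prop := OccursAt p.2 π.2 0

/-- Crossing lemma: containment between vertices preserves the side. -/
lemma straddle_cross (hs : Straddles p q) (hr : p.1 + 3 ≤ q.1) {π ρ : PermS}
    (hπ : π ∈ openInterval p q) (hρ : ρ ∈ openInterval p q) (hle : pLE π ρ) :
    Lcl p π ↔ Lcl p ρ := by
  obtain ⟨jπ, hjπ, hcπ, huπ⟩ := straddle_vertex hs hr hπ.1 hπ.2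
  obtain ⟨jρ, hjρ, hcρ, huρ⟩ := straddle_vertex hs hr hρ.1 hρ.2
  have hlenπ : p.1 < π.1 := pLT_len hπ.1
  rcases eq_or_ne π ρ with heq | hne
  · rw [heq]
  have hlenρ : π.1 < ρ.1 := pLT_len ⟨hle, hne⟩
  obtain ⟨t, ht⟩ := hle
  have htb : t + π.1 ≤ ρ.1 := ht.1
  -- p occurs in ρ at t + jπ, hence t + jπ = jρ
  have hkey : t + jπ = jρ := (huρ _ (occursAt_trans hjπ ht)).symm.symm
  constructor
  · intro hL
    have hj0 : jπ = 0 := (huπ 0 hL).symm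
    by_contra hnotL
    have hjρ0 : jρ ≠ 0 := fun h0 => hnotL (show OccursAt p.snd ρ.snd 0 by rw [← h0]; exact hjρ)
    rcases hcρ with h | h <;> omega
  · intro hL
    have hjρ' : jρ = 0 := (huρ 0 hL).symm
    have hjπ' : jπ = 0 := by omega
    show OccursAt p.snd π.snd 0
    rw [← hjπ']
    exact hjπ

end Straddle

theorem straddle_disconnected {p q : PermS} (hs : Straddles p q) (hr : p.1 + 3 ≤ q.1) :
    IntervalDisconnected p q := by
  have hq1 : 0 + (p.1 + 1) ≤ q.1 := by omega
  have hq2 : (q.1 - p.1 - 1) + (p.1 + 1) ≤ q.1 := by omega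
  set u : PermS := ⟨p.1 + 1, window q.2 0 (p.1 + 1)⟩ with hu_def
  set v : PermS := ⟨p.1 + 1, window q.2 (q.1 - p.1 - 1) (p.1 + 1)⟩ with hv_def
  have hu_occ_q : OccursAt u.2 q.2 0 := window_occursAt q.2 0 (p.1 + 1) hq1
  have hv_occ_q : OccursAt v.2 q.2 (q.1 - p.1 - 1) :=
    window_occursAt q.2 (q.1 - p.1 - 1) (p.1 + 1) hq2
  have pu0 : OccursAt p.2 u.2 0 :=
    occursAt_sub (i := 0) (j := 0) hs.2.1 hu_occ_q (by rw [hu_def]; show 0 + p.1 ≤ p.1 + 1; omega)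
  have pv1 : OccursAt p.2 v.2 1 := by
    have he : q.1 - p.1 - 1 + 1 = q.1 - p.1 := by omega
    refine occursAt_sub (i := q.1 - p.1 - 1) (j := 1) ?_ hv_occ_q (by rw [hv_def]; show 1 + p.1 ≤ p.1 + 1; omega)
    rw [he]
    exact hs.2.2.1
  have hu_mem : u ∈ openInterval p q := by
    refine ⟨⟨⟨0, pu0⟩, ne_of_fst_ne (by show p.1 ≠ p.1 + 1; omega)⟩,
      ⟨⟨0, hu_occ_q⟩, ne_of_fst_ne (by show p.1 + 1 ≠ q.1; omega)⟩⟩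
  have hv_mem : v ∈ openInterval p q := by
    refine ⟨⟨⟨1, pv1⟩, ne_of_fst_ne (by show p.1 ≠ p.1 + 1; omega)⟩,
      ⟨⟨q.1 - p.1 - 1, hv_occ_q⟩, ne_of_fst_ne (by show p.1 + 1 ≠ q.1; omega)⟩⟩
  have hLu : Lcl p u := pu0
  have hLv : ¬ Lcl p v := by
    intro h
    have := straddle_transfer hs h hv_occ_q
    omega
  intro hconn
  have hreach := hconn.preconnected ⟨u, hu_mem⟩ ⟨v, hv_mem⟩
  obtain ⟨w⟩ := hreach
  have inv : ∀ (x y : openInterval p q), (hasse p q).Walk x y → Lcl p x.1 → Lcl p y.1 := by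
    intro x y w
    induction w with
    | nil => exact id
    | @cons a b c ha _ ih =>
      intro hx
      apply ih
      rw [hasse, SimpleGraph.fromRel_adj] at ha
      rcases ha.2 with hcov | hcov
      · exact (straddle_cross hs hr a.2 b.2 hcov.1.1).mp hx
      · exact (straddle_cross hs hr b.2 a.2 hcov.1.1).mpr hx
  exact hLv (inv _ _ w hLu)

section Construction
variable {m : ℕ} (σ : Perm' m)

def aFun (x : Fin (m + 2)) : Fin (m + 2) :=
  if h0 : (x : ℕ) = 0 then ⟨m + 1, by omega⟩
  else if h1 : (x : ℕ) = 1 then ⟨0, by omega⟩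
  else ⟨(σ ⟨(x : ℕ) - 2, by have := x.isLt; omega⟩ : ℕ) + 1,
    by have := (σ ⟨(x : ℕ) - 2, by have := x.isLt; omega⟩).isLt; omega⟩

lemma aFun_val0 {x : Fin (m + 2)} (hx : (x : ℕ) = 0) : (aFun σ x : ℕ) = m + 1 := by
  unfold aFun; rw [dif_pos hx]

lemma aFun_val1 {x : Fin (m + 2)} (hx : (x : ℕ) = 1) : (aFun σ x : ℕ) = 0 := by
  unfold aFun; rw [dif_neg (by omega), dif_pos hx]

lemma aFun_val2 {x : Fin (m + 2)} (hx : 2 ≤ (x : ℕ)) (hpf : (x : ℕ) - 2 < m) :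
    (aFun σ x : ℕ) = (σ ⟨(x : ℕ) - 2, hpf⟩ : ℕ) + 1 := by
  unfold aFun; rw [dif_neg (by omega), dif_neg (by omega)]

lemma sigma_lt (z : Fin m) : (σ z : ℕ) < m := (σ z).isLt

lemma aFun_inj : Function.Injective (aFun σ) := by
  intro x y h
  have hv : ((aFun σ x : Fin (m + 2)) : ℕ) = ((aFun σ y : Fin (m + 2)) : ℕ) :=
    congrArg Fin.val h
  have hx2 := x.isLt
  have hy2 := y.isLt
  rcases Nat.lt_or_ge (x : ℕ) 2 with hx | hx <;> rcases Nat.lt_or_ge (y : ℕ) 2 with hy | hy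
  · rcases Nat.lt_or_ge (x : ℕ) 1 with hx1 | hx1 <;> rcases Nat.lt_or_ge (y : ℕ) 1 with hy1 | hy1
    · exact Fin.ext (by omega)
    · rw [aFun_val0 σ (x := x) (by omega), aFun_val1 σ (x := y) (by omega)] at hv; omega
    · rw [aFun_val1 σ (x := x) (by omega), aFun_val0 σ (x := y) (by omega)] at hv; omega
    · exact Fin.ext (by omega)
  · rw [aFun_val2 σ hy (by omega)] at hv
    have := sigma_lt σ ⟨(y : ℕ) - 2, by omega⟩
    rcases Nat.lt_or_ge (x : ℕ) 1 with h1 | h1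
    · rw [aFun_val0 σ (x := x) (by omega)] at hv; omega
    · rw [aFun_val1 σ (x := x) (by omega)] at hv; omega
  · rw [aFun_val2 σ hx (by omega)] at hv
    have := sigma_lt σ ⟨(x : ℕ) - 2, by omega⟩
    rcases Nat.lt_or_ge (y : ℕ) 1 with h1 | h1
    · rw [aFun_val0 σ (x := y) (by omega)] at hv; omega
    · rw [aFun_val1 σ (x := y) (by omega)] at hv; omega
  · rw [aFun_val2 σ hx (by omega), aFun_val2 σ hy (by omega)] at hv
    have hσ : σ ⟨(x : ℕ) - 2, by omega⟩ = σ ⟨(y : ℕ) - 2, by omega⟩ := Fin.ext (by omega)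
    have hxy := congrArg Fin.val (σ.injective hσ)
    simp only [Fin.val_mk] at hxy
    exact Fin.ext (by omega)

def aPerm : Perm' (m + 2) :=
  Equiv.ofBijective (aFun σ) ((Finite.injective_iff_bijective).mp (aFun_inj σ))

lemma aPerm_apply (x : Fin (m + 2)) : aPerm σ x = aFun σ x := rfl

lemma aPerm_max {x : Fin (m + 2)} (hx : (x : ℕ) ≠ 0) : (aPerm σ x : ℕ) < m + 1 := by
  rw [aPerm_apply]
  rcases Nat.lt_or_ge (x : ℕ) 2 with h1 | h1
  · rw [aFun_val1 σ (by omega)]; omega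
  · rw [aFun_val2 σ h1 (by have := x.isLt; omega)]
    have := sigma_lt σ ⟨(x : ℕ) - 2, by have := x.isLt; omega⟩
    omega

def bFun (x : Fin (2 * (m + 2))) : Fin (2 * (m + 2)) :=
  if h : (x : ℕ) < m + 2 then
    ⟨2 * (aFun σ ⟨(x : ℕ), h⟩ : ℕ), by have := (aFun σ ⟨(x : ℕ), h⟩).isLt; omega⟩
  else
    ⟨2 * (aFun σ ⟨(x : ℕ) - (m + 2), by have := x.isLt; omega⟩ : ℕ) + 1,
      by have := (aFun σ ⟨(x : ℕ) - (m + 2), by have := x.isLt; omega⟩).isLt; omega⟩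

lemma bFun_val_lo {x : Fin (2 * (m + 2))} (h : (x : ℕ) < m + 2) :
    (bFun σ x : ℕ) = 2 * (aFun σ ⟨(x : ℕ), h⟩ : ℕ) := by
  unfold bFun; rw [dif_pos h]

lemma bFun_val_hi {x : Fin (2 * (m + 2))} (h : ¬ (x : ℕ) < m + 2)
    (hpf : (x : ℕ) - (m + 2) < m + 2) :
    (bFun σ x : ℕ) = 2 * (aFun σ ⟨(x : ℕ) - (m + 2), hpf⟩ : ℕ) + 1 := by
  unfold bFun; rw [dif_neg h]

lemma bFun_inj : Function.Injective (bFun σ) := by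
  intro x y h
  have hv : ((bFun σ x : Fin (2 * (m + 2))) : ℕ) = ((bFun σ y : Fin (2 * (m + 2))) : ℕ) :=
    congrArg Fin.val h
  have hx2 := x.isLt
  have hy2 := y.isLt
  by_cases hx : (x : ℕ) < m + 2 <;> by_cases hy : (y : ℕ) < m + 2
  · rw [bFun_val_lo σ hx, bFun_val_lo σ hy] at hv
    have hσ : aFun σ ⟨(x : ℕ), hx⟩ = aFun σ ⟨(y : ℕ), hy⟩ := Fin.ext (by omega)
    have hxy := congrArg Fin.val (aFun_inj σ hσ)
    simp only [Fin.val_mk] at hxy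
    exact Fin.ext (by omega)
  · rw [bFun_val_lo σ hx, bFun_val_hi σ hy (by omega)] at hv
    omega
  · rw [bFun_val_hi σ hx (by omega), bFun_val_lo σ hy] at hv
    omega
  · rw [bFun_val_hi σ hx (by omega), bFun_val_hi σ hy (by omega)] at hv
    have hσ : aFun σ ⟨(x : ℕ) - (m + 2), by omega⟩ = aFun σ ⟨(y : ℕ) - (m + 2), by omega⟩ :=
      Fin.ext (by omega)
    have hxy := congrArg Fin.val (aFun_inj σ hσ)
    simp only [Fin.val_mk] at hxy
    exact Fin.ext (by omega)

def bPerm : Perm' (2 * (m + 2)) :=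
  Equiv.ofBijective (bFun σ) ((Finite.injective_iff_bijective).mp (bFun_inj σ))

lemma bPerm_apply (x : Fin (2 * (m + 2))) : bPerm σ x = bFun σ x := rfl

lemma aPerm_val_occ (s : Fin m) (hpf : 2 + (s : ℕ) < m + 2) :
    (aPerm σ ⟨2 + (s : ℕ), hpf⟩ : ℕ) = (σ s : ℕ) + 1 := by
  rw [aPerm_apply, aFun_val2 σ (by simp only [Fin.val_mk]; omega) (by simp only [Fin.val_mk]; omega)]
  congr 2
  exact Fin.ext (by simp)

lemma aPerm_val_zero (hpf : 0 < m + 2) : (aPerm σ ⟨0, hpf⟩ : ℕ) = m + 1 := by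
  rw [aPerm_apply]; exact aFun_val0 σ rfl

lemma bPerm_val_lo' (v : ℕ) (h1 : v < m + 2) (hpf : v < 2 * (m + 2)) :
    (bPerm σ ⟨v, hpf⟩ : ℕ) = 2 * (aPerm σ ⟨v, h1⟩ : ℕ) := by
  rw [bPerm_apply, bFun_val_lo σ (by simpa using h1)]
  simp only [aPerm_apply]

lemma bPerm_val_lo (s : Fin (m + 2)) (hpf : 0 + (s : ℕ) < 2 * (m + 2)) :
    (bPerm σ ⟨0 + (s : ℕ), hpf⟩ : ℕ) = 2 * (aPerm σ s : ℕ) := by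
  rw [bPerm_val_lo' σ (0 + (s : ℕ)) (by have := s.isLt; omega)]
  congr 2
  exact Fin.ext (by simp)

lemma bPerm_val_hi' (v : ℕ) (h1 : m + 2 ≤ v) (hpf : v < 2 * (m + 2)) :
    (bPerm σ ⟨v, hpf⟩ : ℕ) = 2 * (aPerm σ ⟨v - (m + 2), by omega⟩ : ℕ) + 1 := by
  rw [bPerm_apply, bFun_val_hi σ (by simp only [Fin.val_mk]; omega) (by simp only [Fin.val_mk]; omega)]
  simp only [aPerm_apply]

lemma bPerm_val_hi (s : Fin (m + 2)) (hpf : (m + 2) + (s : ℕ) < 2 * (m + 2)) :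
    (bPerm σ ⟨(m + 2) + (s : ℕ), hpf⟩ : ℕ) = 2 * (aPerm σ s : ℕ) + 1 := by
  rw [bPerm_val_hi' σ ((m + 2) + (s : ℕ)) (by omega)]
  congr 3
  exact Fin.ext (by simp)

lemma occ_sigma_a : OccursAt σ (aPerm σ) 2 := by
  refine ⟨by omega, fun s t => ?_⟩
  simp only [Fin.lt_def]
  rw [aPerm_val_occ σ s, aPerm_val_occ σ t]
  omega

lemma occ_a_b_0 : OccursAt (aPerm σ) (bPerm σ) 0 := by
  refine ⟨by omega, fun s t => ?_⟩
  simp only [Fin.lt_def]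
  rw [bPerm_val_lo σ s, bPerm_val_lo σ t]
  omega

lemma occ_a_b_L : OccursAt (aPerm σ) (bPerm σ) (m + 2) := by
  refine ⟨by omega, fun s t => ?_⟩
  simp only [Fin.lt_def]
  rw [bPerm_val_hi σ s, bPerm_val_hi σ t]
  omega

lemma occ_only (i : ℕ) (hocc : OccursAt (aPerm σ) (bPerm σ) i) :
    i = 0 ∨ i = m + 2 := by
  obtain ⟨hb, hiff⟩ := hocc
  by_contra hcon
  push_neg at hcon
  have hi1 : 1 ≤ i := by omega
  have hi2 : i ≤ m + 1 := by omega
  set t0 : Fin (m + 2) := ⟨m + 2 - i, by omega⟩ with ht0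
  set z0 : Fin (m + 2) := ⟨0, by omega⟩ with hz0
  have hLHS : aPerm σ t0 < aPerm σ z0 := by
    rw [Fin.lt_def]
    have h1 : (aPerm σ t0 : ℕ) < m + 1 := aPerm_max σ (by simp [ht0]; omega)
    have h2 : (aPerm σ z0 : ℕ) = m + 1 := aPerm_val_zero σ (by omega)
    omega
  have hRHS := (hiff t0 z0).mp hLHS
  rw [Fin.lt_def] at hRHS
  have e1 : (bPerm σ ⟨i + (t0 : ℕ), by have := t0.isLt; omega⟩ : ℕ) = 2 * (m + 1) + 1 := by
    have hidx : i + (t0 : ℕ) = m + 2 := by simp [ht0]; omega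
    rw [bPerm_val_hi' σ (i + (t0 : ℕ)) (by omega)]
    have : (aPerm σ ⟨i + (t0 : ℕ) - (m + 2), by omega⟩ : ℕ) = m + 1 := by
      rw [aPerm_apply, aFun_val0 σ (by simp; omega)]
    omega
  have e2 : (bPerm σ ⟨i + (z0 : ℕ), by have := z0.isLt; omega⟩ : ℕ) ≤ 2 * (m + 1) := by
    rw [bPerm_val_lo' σ (i + (z0 : ℕ)) (by simp [hz0]; omega)]
    have := (aPerm σ ⟨i + (z0 : ℕ), by simp [hz0]; omega⟩).isLt
    omega
  rw [e1] at hRHS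
  have hcontra := hRHS.trans_le e2
  omega

end Construction

section Assemble
variable {m : ℕ} (σ : Perm' m)

lemma construction_straddles :
    Straddles ⟨m + 2, aPerm σ⟩ ⟨2 * (m + 2), bPerm σ⟩ := by
  refine ⟨⟨⟨0, occ_a_b_0 σ⟩, ne_of_fst_ne (by show m + 2 ≠ 2 * (m + 2); omega)⟩,
    occ_a_b_0 σ, ?_, ?_⟩
  · show OccursAt (aPerm σ) (bPerm σ) (2 * (m + 2) - (m + 2))
    rw [show 2 * (m + 2) - (m + 2) = m + 2 from by omega]
    exact occ_a_b_L σ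
  · intro i hi
    have := occ_only σ i hi
    show i = 0 ∨ i = 2 * (m + 2) - (m + 2)
    omega

lemma hasSub_of_contains (hm : 1 ≤ m) {n : ℕ} {τ : Perm' n}
    (h : pLE ⟨2 * (m + 2), bPerm σ⟩ ⟨n, τ⟩) :
    HasNontrivDisconSub ⟨m, σ⟩ ⟨n, τ⟩ := by
  refine ⟨⟨m + 2, aPerm σ⟩, ⟨2 * (m + 2), bPerm σ⟩, ⟨2, occ_sigma_a σ⟩,
    ⟨0, occ_a_b_0 σ⟩, h, by show (m + 2) + 3 ≤ 2 * (m + 2); omega,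
    straddle_disconnected (construction_straddles σ)
      (by show (m + 2) + 3 ≤ 2 * (m + 2); omega)⟩

end Assemble

section Counting
variable {L n k : ℕ}

def blockFun (hL0 : 0 < L) (hkL : k * L ≤ n) (ρ : Fin k → Perm' L) (x : Fin n) : Fin n :=
  if h : (x : ℕ) < k * L then
    ⟨((x : ℕ) / L) * L +
        (ρ ⟨(x : ℕ) / L, (Nat.div_lt_iff_lt_mul hL0).mpr h⟩
          ⟨(x : ℕ) % L, Nat.mod_lt _ hL0⟩ : ℕ), by
      have hρ := (ρ ⟨(x : ℕ) / L, (Nat.div_lt_iff_lt_mul hL0).mpr h⟩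
          ⟨(x : ℕ) % L, Nat.mod_lt _ hL0⟩).isLt
      have hd : (x : ℕ) / L + 1 ≤ k := (Nat.div_lt_iff_lt_mul hL0).mpr h
      have := Nat.mul_le_mul_right L hd
      rw [Nat.add_mul, Nat.one_mul] at this
      omega⟩
  else x

lemma blockFun_inj (hL0 : 0 < L) (hkL : k * L ≤ n) (ρ : Fin k → Perm' L) :
    Function.Injective (blockFun hL0 hkL ρ) := by
  intro x y h
  have hv := congrArg Fin.val h
  by_cases hx : (x : ℕ) < k * L <;> by_cases hy : (y : ℕ) < k * L
  · simp only [blockFun, dif_pos hx, dif_pos hy, Fin.val_mk] at hv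
    have hdx : ((x : ℕ) / L * L + (ρ ⟨(x : ℕ) / L, (Nat.div_lt_iff_lt_mul hL0).mpr hx⟩ ⟨(x : ℕ) % L, Nat.mod_lt _ hL0⟩ : ℕ)) / L
        = (x : ℕ) / L := by
      rw [Nat.mul_comm, Nat.mul_add_div hL0, Nat.div_eq_of_lt (Fin.isLt _), Nat.add_zero]
    have hdy : ((y : ℕ) / L * L + (ρ ⟨(y : ℕ) / L, (Nat.div_lt_iff_lt_mul hL0).mpr hy⟩ ⟨(y : ℕ) % L, Nat.mod_lt _ hL0⟩ : ℕ)) / L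
        = (y : ℕ) / L := by
      rw [Nat.mul_comm, Nat.mul_add_div hL0, Nat.div_eq_of_lt (Fin.isLt _), Nat.add_zero]
    have hdiv : (x : ℕ) / L = (y : ℕ) / L := by rw [← hdx, ← hdy, hv]
    have hmx : ((x : ℕ) / L * L + (ρ ⟨(x : ℕ) / L, (Nat.div_lt_iff_lt_mul hL0).mpr hx⟩ ⟨(x : ℕ) % L, Nat.mod_lt _ hL0⟩ : ℕ)) % L
        = (ρ ⟨(x : ℕ) / L, (Nat.div_lt_iff_lt_mul hL0).mpr hx⟩ ⟨(x : ℕ) % L, Nat.mod_lt _ hL0⟩ : ℕ) := by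
      rw [Nat.mul_comm, Nat.mul_add_mod, Nat.mod_eq_of_lt (Fin.isLt _)]
    have hmy : ((y : ℕ) / L * L + (ρ ⟨(y : ℕ) / L, (Nat.div_lt_iff_lt_mul hL0).mpr hy⟩ ⟨(y : ℕ) % L, Nat.mod_lt _ hL0⟩ : ℕ)) % L
        = (ρ ⟨(y : ℕ) / L, (Nat.div_lt_iff_lt_mul hL0).mpr hy⟩ ⟨(y : ℕ) % L, Nat.mod_lt _ hL0⟩ : ℕ) := by
      rw [Nat.mul_comm, Nat.mul_add_mod, Nat.mod_eq_of_lt (Fin.isLt _)]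
    have hρeq : (ρ ⟨(x : ℕ) / L, (Nat.div_lt_iff_lt_mul hL0).mpr hx⟩ ⟨(x : ℕ) % L, Nat.mod_lt _ hL0⟩ : ℕ)
        = (ρ ⟨(y : ℕ) / L, (Nat.div_lt_iff_lt_mul hL0).mpr hy⟩ ⟨(y : ℕ) % L, Nat.mod_lt _ hL0⟩ : ℕ) := by rw [← hmx, ← hmy, hv]
    have hjeq : (⟨(x : ℕ) / L, (Nat.div_lt_iff_lt_mul hL0).mpr hx⟩ : Fin k)
        = ⟨(y : ℕ) / L, (Nat.div_lt_iff_lt_mul hL0).mpr hy⟩ := Fin.ext hdiv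
    rw [hjeq] at hρeq
    have := (ρ ⟨(y : ℕ) / L, (Nat.div_lt_iff_lt_mul hL0).mpr hy⟩).injective
      (Fin.ext hρeq)
    have hmod : (x : ℕ) % L = (y : ℕ) % L := congrArg Fin.val this
    have hval : (x : ℕ) = (y : ℕ) := by
      rw [← Nat.div_add_mod (x : ℕ) L, ← Nat.div_add_mod (y : ℕ) L, hdiv, hmod]
    exact Fin.ext hval
  · exfalso
    simp only [blockFun, dif_pos hx, dif_neg hy, Fin.val_mk] at hv
    have hρ := (ρ ⟨(x : ℕ) / L, (Nat.div_lt_iff_lt_mul hL0).mpr hx⟩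
        ⟨(x : ℕ) % L, Nat.mod_lt _ hL0⟩).isLt
    have hd : (x : ℕ) / L + 1 ≤ k := (Nat.div_lt_iff_lt_mul hL0).mpr hx
    have := Nat.mul_le_mul_right L hd
    rw [Nat.add_mul, Nat.one_mul] at this
    omega
  · exfalso
    simp only [blockFun, dif_neg hx, dif_pos hy, Fin.val_mk] at hv
    have hρ := (ρ ⟨(y : ℕ) / L, (Nat.div_lt_iff_lt_mul hL0).mpr hy⟩
        ⟨(y : ℕ) % L, Nat.mod_lt _ hL0⟩).isLt
    have hd : (y : ℕ) / L + 1 ≤ k := (Nat.div_lt_iff_lt_mul hL0).mpr hy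
    have := Nat.mul_le_mul_right L hd
    rw [Nat.add_mul, Nat.one_mul] at this
    omega
  · simpa only [blockFun, dif_neg hx, dif_neg hy] using h

def blockPerm (hL0 : 0 < L) (hkL : k * L ≤ n) (ρ : Fin k → Perm' L) : Perm' n :=
  Equiv.ofBijective (blockFun hL0 hkL ρ)
    ((Finite.injective_iff_bijective).mp (blockFun_inj hL0 hkL ρ))

lemma blockPerm_val (hL0 : 0 < L) (hkL : k * L ≤ n) (ρ : Fin k → Perm' L) (j : Fin k) (t : Fin L)
    (pf : (j : ℕ) * L + (t : ℕ) < n) :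
    ((blockPerm hL0 hkL ρ ⟨(j : ℕ) * L + (t : ℕ), pf⟩ : Fin n) : ℕ)
      = (j : ℕ) * L + (ρ j t : ℕ) := by
  have hlt : (j : ℕ) * L + (t : ℕ) < k * L := by
    have hd : (j : ℕ) + 1 ≤ k := j.isLt
    have := Nat.mul_le_mul_right L hd
    rw [Nat.add_mul, Nat.one_mul] at this
    have := t.isLt
    omega
  have e1 : ((j : ℕ) * L + (t : ℕ)) / L = (j : ℕ) := by
    rw [Nat.mul_comm, Nat.mul_add_div hL0, Nat.div_eq_of_lt t.isLt, Nat.add_zero]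
  have e2 : ((j : ℕ) * L + (t : ℕ)) % L = (t : ℕ) := by
    rw [Nat.mul_comm, Nat.mul_add_mod, Nat.mod_eq_of_lt t.isLt]
  show ((blockFun hL0 hkL ρ ⟨(j : ℕ) * L + (t : ℕ), pf⟩ : Fin n) : ℕ) = _
  simp only [blockFun, dif_pos (show ((⟨(j : ℕ) * L + (t : ℕ), pf⟩ : Fin n) : ℕ) < k * L
    from hlt), Fin.val_mk]
  simp only [e1, e2, Fin.eta]

def psi (τ : Perm' n) (j : Fin k) : Perm' L := window τ ((j : ℕ) * L) L

lemma block_window_le (hkL : k * L ≤ n) (j : Fin k) : (j : ℕ) * L + L ≤ n := by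
  have hd : (j : ℕ) + 1 ≤ k := j.isLt
  have := Nat.mul_le_mul_right L hd
  rw [Nat.add_mul, Nat.one_mul] at this
  omega

lemma psi_equivariant (hL0 : 0 < L) (hkL : k * L ≤ n) (τ : Perm' n)
    (ρ : Fin k → Perm' L) (j : Fin k) :
    psi (τ * blockPerm hL0 hkL ρ) j = psi τ j * ρ j := by
  have hb : (j : ℕ) * L + L ≤ n := block_window_le hkL j
  apply perm_eq_of_iff
  intro a b
  rw [show psi (τ * blockPerm hL0 hkL ρ) j = window (τ * blockPerm hL0 hkL ρ)
    ((j : ℕ) * L) L from rfl]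
  rw [window_lt_iff _ _ _ hb a b]
  have hidx : ∀ (c : Fin L) (pf : (j : ℕ) * L + (c : ℕ) < n),
      (τ * blockPerm hL0 hkL ρ) ⟨(j : ℕ) * L + (c : ℕ), pf⟩
        = τ ⟨(j : ℕ) * L + ((ρ j c : Fin L) : ℕ), by
            have := (ρ j c).isLt; have := block_window_le hkL j; omega⟩ := by
    intro c pf
    show τ (blockPerm hL0 hkL ρ ⟨(j : ℕ) * L + (c : ℕ), pf⟩) = _
    congr 1
    exact Fin.ext (blockPerm_val hL0 hkL ρ j c pf)
  rw [hidx a, hidx b]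
  have h2 := window_lt_iff τ ((j : ℕ) * L) L hb (ρ j a) (ρ j b)
  exact h2.symm

lemma occurs_iff_psi (hkL : k * L ≤ n) (β : Perm' L) (τ : Perm' n) (j : Fin k) :
    OccursAt β τ ((j : ℕ) * L) ↔ psi τ j = β := by
  constructor
  · intro h
    exact occursAt_window_eq h
  · intro h
    rw [show psi τ j = window τ ((j : ℕ) * L) L from rfl] at h
    rw [← h]
    exact window_occursAt τ _ _ (block_window_le hkL j)

lemma fiber_card_le (hL0 : 0 < L) (hkL : k * L ≤ n) (v w : Fin k → Perm' L) :
    ((Finset.univ : Finset (Perm' n)).filter fun τ => psi τ = v).card ≤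
      ((Finset.univ : Finset (Perm' n)).filter fun τ => psi τ = w).card := by
  classical
  apply Finset.card_le_card_of_injOn
    (fun τ => τ * blockPerm hL0 hkL (fun j => (v j)⁻¹ * w j))
  · intro τ hτ
    simp only [Finset.mem_coe, Finset.mem_filter, Finset.mem_univ, true_and] at hτ ⊢
    funext j
    rw [psi_equivariant hL0 hkL, hτ, mul_inv_cancel_left]
  · intro τ1 _ τ2 _ h
    exact mul_right_cancel h

lemma fiber_card_eq (hL0 : 0 < L) (hkL : k * L ≤ n) (v w : Fin k → Perm' L) :
    ((Finset.univ : Finset (Perm' n)).filter fun τ => psi τ = v).card =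
      ((Finset.univ : Finset (Perm' n)).filter fun τ => psi τ = w).card :=
  le_antisymm (fiber_card_le hL0 hkL v w) (fiber_card_le hL0 hkL w v)

lemma bad_count (hL0 : 0 < L) (hkL : k * L ≤ n) (β : Perm' L) :
    ((Finset.univ : Finset (Perm' n)).filter fun τ => ∀ j : Fin k, psi τ j ≠ β).card
        * (Nat.factorial L) ^ k
      = ((Nat.factorial L - 1) ^ k) * Nat.factorial n := by
  classical
  set fib : (Fin k → Perm' L) → ℕ :=
    fun v => ((Finset.univ : Finset (Perm' n)).filter fun τ => psi τ = v).card with hfib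
  set c : ℕ := fib (fun _ => β) with hc
  have hconst : ∀ v, fib v = c := fun v => fiber_card_eq hL0 hkL v _
  have htotal : Nat.factorial n = (Nat.factorial L) ^ k * c := by
    have h1 : (Finset.univ : Finset (Perm' n)).card
        = ∑ v ∈ (Finset.univ : Finset (Fin k → Perm' L)), fib v :=
      Finset.card_eq_sum_card_fiberwise (fun τ _ => Finset.mem_univ (psi τ))
    rw [Finset.card_univ, Fintype.card_perm, Fintype.card_fin] at h1
    rw [h1]
    rw [Finset.sum_congr rfl (fun v _ => hconst v), Finset.sum_const, Finset.card_univ,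
      Fintype.card_fun, Fintype.card_perm, Fintype.card_fin, Fintype.card_fin, smul_eq_mul]
  set B := (Finset.univ : Finset (Perm' n)).filter fun τ => ∀ j : Fin k, psi τ j ≠ β with hB
  set Vbad := (Finset.univ : Finset (Fin k → Perm' L)).filter fun v => ∀ j, v j ≠ β with hV
  have hBcard : B.card = ∑ v ∈ Vbad, fib v := by
    have h2 : B.card = ∑ v ∈ Vbad, (B.filter fun τ => psi τ = v).card := by
      apply Finset.card_eq_sum_card_fiberwise
      intro τ hτ
      rw [Finset.mem_coe, hB, Finset.mem_filter] at hτ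
      rw [Finset.mem_coe, hV, Finset.mem_filter]
      exact ⟨Finset.mem_univ _, fun j => hτ.2 j⟩
    rw [h2]
    apply Finset.sum_congr rfl
    intro v hv
    rw [hV, Finset.mem_filter] at hv
    congr 1
    ext τ
    simp only [hB, Finset.mem_filter, Finset.mem_univ, true_and]
    constructor
    · exact fun h => h.2
    · intro h
      exact ⟨fun j => h ▸ hv.2 j, h⟩
  have hVcard : Vbad.card = (Nat.factorial L - 1) ^ k := by
    have h3 : Vbad.card = Fintype.card {v : Fin k → Perm' L // ∀ j, v j ≠ β} := by
      rw [Fintype.card_subtype]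
    rw [h3, Fintype.card_congr
      (Equiv.subtypePiEquivPi (p := fun (_ : Fin k) (x : Perm' L) => x ≠ β)), Fintype.card_pi]
    have h4 : ∀ j : Fin k, Fintype.card {x : Perm' L // x ≠ β} = Nat.factorial L - 1 := by
      intro j
      rw [Fintype.card_subtype_compl, Fintype.card_subtype_eq, Fintype.card_perm,
        Fintype.card_fin]
    rw [Finset.prod_congr rfl (fun j _ => h4 j), Finset.prod_const, Finset.card_univ,
      Fintype.card_fin]
  rw [hBcard, Finset.sum_congr rfl (fun v _ => hconst v), Finset.sum_const, smul_eq_mul,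
    hVcard, htotal]
  ring

end Counting

theorem stmt7' {m : ℕ} (hm : 1 ≤ m) (σ : Perm' m) :
    Filter.Tendsto
      (fun n : ℕ =>
        ((Finset.univ.filter fun τ : Perm' n =>
            HasNontrivDisconSub ⟨m, σ⟩ ⟨n, τ⟩).card : ℝ) / (Nat.factorial n : ℝ))
      Filter.atTop (nhds 1) := by
  classical
  set L := 2 * (m + 2) with hLdef
  have hL0 : 0 < L := by omega
  set β : Perm' L := bPerm σ with hβ
  set q : ℝ := ((Nat.factorial L - 1 : ℕ) : ℝ) / ((Nat.factorial L : ℕ) : ℝ) with hq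
  have hfacL : 0 < Nat.factorial L := Nat.factorial_pos L
  have hq0 : 0 ≤ q := by positivity
  have hq1 : q < 1 := by
    rw [hq, div_lt_one (by exact_mod_cast hfacL)]
    exact_mod_cast Nat.sub_lt hfacL one_pos
  have hdiv : Filter.Tendsto (fun n : ℕ => n / L) Filter.atTop Filter.atTop := by
    apply Filter.tendsto_atTop_atTop.mpr
    intro b
    exact ⟨b * L, fun n hn => (Nat.le_div_iff_mul_le hL0).mpr hn⟩
  have hqpow : Filter.Tendsto (fun n : ℕ => q ^ (n / L)) Filter.atTop (nhds 0) :=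
    (tendsto_pow_atTop_nhds_zero_of_lt_one hq0 hq1).comp hdiv
  have hlow : Filter.Tendsto (fun n : ℕ => 1 - q ^ (n / L)) Filter.atTop (nhds 1) := by
    have := (tendsto_const_nhds (x := (1 : ℝ)) (f := Filter.atTop (α := ℕ))).sub hqpow
    simpa using this
  refine tendsto_of_tendsto_of_tendsto_of_le_of_le hlow tendsto_const_nhds ?_ ?_
  · intro n
    set k := n / L with hk
    have hkL : k * L ≤ n := Nat.div_mul_le_self n L
    set B := (Finset.univ : Finset (Perm' n)).filter
      (fun τ => ∀ j : Fin k, psi τ j ≠ β) with hB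
    set S := (Finset.univ : Finset (Perm' n)).filter
      (fun τ => HasNontrivDisconSub ⟨m, σ⟩ ⟨n, τ⟩) with hS
    have hBS : Finset.univ \ B ⊆ S := by
      intro τ hτ
      rw [Finset.mem_sdiff, hB, Finset.mem_filter] at hτ
      have hex : ∃ j : Fin k, psi τ j = β := by
        by_contra hcon
        push_neg at hcon
        exact hτ.2 ⟨Finset.mem_univ _, hcon⟩
      obtain ⟨j, hj⟩ := hex
      rw [hS, Finset.mem_filter]
      exact ⟨Finset.mem_univ _,
        hasSub_of_contains σ hm ⟨(j : ℕ) * L, (occurs_iff_psi hkL β τ j).mpr hj⟩⟩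
    have hBcard_le : B.card ≤ Nat.factorial n := by
      have := Finset.card_filter_le (Finset.univ : Finset (Perm' n))
        (fun τ => ∀ j : Fin k, psi τ j ≠ β)
      rwa [Finset.card_univ, Fintype.card_perm, Fintype.card_fin] at this
    have hScard_ge : Nat.factorial n - B.card ≤ S.card := by
      have hsd : (Finset.univ \ B).card = Nat.factorial n - B.card := by
        rw [Finset.card_sdiff_of_subset (Finset.filter_subset _ _), Finset.card_univ,
          Fintype.card_perm, Fintype.card_fin]
      rw [← hsd]
      exact Finset.card_le_card hBS
    have key := bad_count hL0 hkL β
    have hfac : (0 : ℝ) < (Nat.factorial n : ℝ) := by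
      exact_mod_cast Nat.factorial_pos n
    have hBb : (B.card : ℝ) / (Nat.factorial n : ℝ) = q ^ k := by
      rw [hq, div_pow, div_eq_div_iff (ne_of_gt hfac) (by positivity)]
      exact_mod_cast key
    have h1 : ((Nat.factorial n : ℝ) - (B.card : ℝ)) ≤ (S.card : ℝ) := by
      have h2 : ((Nat.factorial n - B.card : ℕ) : ℝ) ≤ (S.card : ℝ) :=
        Nat.cast_le.mpr hScard_ge
      rwa [Nat.cast_sub hBcard_le] at h2
    have h3 : 1 - q ^ k = ((Nat.factorial n : ℝ) - (B.card : ℝ)) / (Nat.factorial n : ℝ) := by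
      rw [sub_div, div_self (ne_of_gt hfac), hBb]
    show 1 - q ^ k ≤ (S.card : ℝ) / (Nat.factorial n : ℝ)
    rw [h3]
    exact div_le_div_of_nonneg_right h1 hfac.le
  · intro n
    have hcard : ((Finset.univ : Finset (Perm' n)).filter
        (fun τ => HasNontrivDisconSub ⟨m, σ⟩ ⟨n, τ⟩)).card ≤ Nat.factorial n := by
      have := Finset.card_filter_le (Finset.univ : Finset (Perm' n))
        (fun τ => HasNontrivDisconSub ⟨m, σ⟩ ⟨n, τ⟩)
      rwa [Finset.card_univ, Fintype.card_perm, Fintype.card_fin] at this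
    have hfac : (0 : ℝ) < (Nat.factorial n : ℝ) := by
      exact_mod_cast Nat.factorial_pos n
    rw [div_le_one hfac]
    exact_mod_cast hcard

/-- Theorem 3.5: for fixed `σ`, the proportion of permutations `τ` of
length `n` such that `[σ,τ]` contains a non-trivial disconnected subinterval tends to 1. -/
theorem stmt7 {m : ℕ} (hm : 1 ≤ m) (σ : Perm' m) :
    Filter.Tendsto
      (fun n : ℕ =>
        ((Finset.univ.filter fun τ : Perm' n =>
            HasNontrivDisconSub ⟨m, σ⟩ ⟨n, τ⟩).card : ℝ) / (Nat.factorial n : ℝ))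
      Filter.atTop (nhds 1) := stmt7' hm σ

end
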